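/- Let n ≥ 2 and let A be an n×n row-stochastic strictly diagonally dominant positive real matrix. If ((c_min(A) − 1)/(n−1)²)^{1/V} ≥ 2^{n·H_max(A)/σ_min(A)}, where V = c_min(A)/(c_min(A) − 1), then the channel capacity equals the closed-form expression: C(A) = U(A). -/

import Mathlib

open Matrix Finset Real

noncomputable def rowEntropy {n : ℕ} (A : Matrix (Fin n) (Fin n) ℝ) (i : Fin n) : ℝ :=
  -∑ k, A i k * Real.logb 2 (A i k)

noncomputable def Kvec {n : ℕ} (A : Matrix (Fin n) (Fin n) ℝ) (j : Fin n) : ℝ :=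
  ∑ i, A⁻¹ j i * rowEntropy A i

noncomputable def Kmax {n : ℕ} (A : Matrix (Fin n) (Fin n) ℝ) : ℝ := ⨆ j, Kvec A j

noncomputable def Kmin {n : ℕ} (A : Matrix (Fin n) (Fin n) ℝ) : ℝ := ⨅ j, Kvec A j

def IsPmf {n : ℕ} (p : Fin n → ℝ) : Prop := (∀ i, 0 ≤ p i) ∧ ∑ i, p i = 1

noncomputable def mutualInfo {n : ℕ} (A : Matrix (Fin n) (Fin n) ℝ) (p : Fin n → ℝ) : ℝ :=
  -(∑ j, Aᵀ.mulVec p j * Real.logb 2 (Aᵀ.mulVec p j))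
    + ∑ i, ∑ j, p i * A i j * Real.logb 2 (A i j)

noncomputable def capacity {n : ℕ} (A : Matrix (Fin n) (Fin n) ℝ) : ℝ :=
  sSup {x : ℝ | ∃ p : Fin n → ℝ, IsPmf p ∧ mutualInfo A p = x}

noncomputable def qStar {n : ℕ} (A : Matrix (Fin n) (Fin n) ℝ) (j : Fin n) : ℝ :=
  (2 : ℝ) ^ (-Kvec A j) / ∑ i, (2 : ℝ) ^ (-Kvec A i)

noncomputable def pStar {n : ℕ} (A : Matrix (Fin n) (Fin n) ℝ) : Fin n → ℝ :=
  (A⁻¹)ᵀ.mulVec (qStar A)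

noncomputable def Ubound {n : ℕ} (A : Matrix (Fin n) (Fin n) ℝ) : ℝ :=
  -(∑ j, qStar A j * Real.logb 2 (qStar A j))
    + ∑ i, ∑ j, pStar A i * A i j * Real.logb 2 (A i j)

noncomputable def cmin {n : ℕ} (A : Matrix (Fin n) (Fin n) ℝ) : ℝ :=
  ⨅ i, A i i / ∑ j ∈ Finset.univ.erase i, |A i j|

noncomputable def Hmax {n : ℕ} (A : Matrix (Fin n) (Fin n) ℝ) : ℝ := ⨆ i, rowEntropy A i

noncomputable def sigmaMin {n : ℕ} (A : Matrix (Fin n) (Fin n) ℝ) : ℝ :=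
  Real.sqrt (⨅ i, (Matrix.isHermitian_iff_isSymm.mpr (Matrix.isSymm_transpose_mul_self A)).eigenvalues i)

def RowStochastic {n : ℕ} (A : Matrix (Fin n) (Fin n) ℝ) : Prop :=
  (∀ i j, 0 ≤ A i j) ∧ ∀ i, ∑ j, A i j = 1

def SDDPos {n : ℕ} (A : Matrix (Fin n) (Fin n) ℝ) : Prop :=
  (∀ i j, 0 < A i j) ∧ ∀ i, ∑ j ∈ Finset.univ.erase i, A i j < A i i

namespace Cap

variable {n : ℕ} (A : Matrix (Fin n) (Fin n) ℝ)

lemma det_ne (hA : SDDPos A) : A.det ≠ 0 := by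
  apply _root_.det_ne_zero_of_sum_row_lt_diag
  intro k
  have h1 : ∀ j ∈ Finset.univ.erase k, ‖A k j‖ = A k j := fun j _ => by
    rw [Real.norm_eq_abs, abs_of_pos (hA.1 k j)]
  rw [Finset.sum_congr rfl h1, Real.norm_eq_abs, abs_of_pos (hA.1 k k)]
  exact hA.2 k

lemma entry_le_one (hst : RowStochastic A) (i j : Fin n) : A i j ≤ 1 := by
  rw [← hst.2 i]
  exact Finset.single_le_sum (fun k _ => hst.1 i k) (Finset.mem_univ j)

lemma rowEntropy_nonneg (hst : RowStochastic A) (i : Fin n) : 0 ≤ rowEntropy A i := by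
  rw [rowEntropy, neg_nonneg]
  apply Finset.sum_nonpos
  intro k _
  apply mul_nonpos_of_nonneg_of_nonpos (hst.1 i k)
  exact Real.logb_nonpos one_lt_two (hst.1 i k) (entry_le_one A hst i k)

lemma rayleigh (M : Matrix (Fin n) (Fin n) ℝ) (hM : M.IsHermitian) (c : ℝ)
    (hc : ∀ i, c ≤ hM.eigenvalues i) (x : Fin n → ℝ) :
    c * (x ⬝ᵥ x) ≤ x ⬝ᵥ (M *ᵥ x) := by
  have hU : (hM.eigenvectorUnitary : Matrix (Fin n) (Fin n) ℝ) *
      (star (hM.eigenvectorUnitary : Matrix (Fin n) (Fin n) ℝ)) = 1 :=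
    Matrix.mem_unitaryGroup_iff.mp hM.eigenvectorUnitary.2
  have h1 : Matrix.diagonal (fun i => hM.eigenvalues i - c)
      = Matrix.diagonal (RCLike.ofReal ∘ hM.eigenvalues) - c • (1 : Matrix (Fin n) (Fin n) ℝ) := by
    ext i j
    by_cases h : i = j <;>
      simp [h, Matrix.diagonal_apply, Matrix.one_apply, Matrix.sub_apply, Matrix.smul_apply]
  have hdiag : M - c • (1 : Matrix (Fin n) (Fin n) ℝ)
      = (hM.eigenvectorUnitary : Matrix (Fin n) (Fin n) ℝ) *
        Matrix.diagonal (fun i => hM.eigenvalues i - c) *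
        (star (hM.eigenvectorUnitary : Matrix (Fin n) (Fin n) ℝ)) := by
    rw [h1, Matrix.mul_sub, Matrix.sub_mul]
    rw [Matrix.mul_smul, Matrix.mul_one, Matrix.smul_mul, hU]
    conv_lhs => rw [hM.spectral_theorem]
    rw [Unitary.conjStarAlgAut_apply]
  have hps : (M - c • (1 : Matrix (Fin n) (Fin n) ℝ)).PosSemidef := by
    rw [hdiag]
    exact (Matrix.posSemidef_diagonal_iff.mpr (fun i => sub_nonneg.mpr (hc i))).mul_mul_conjTranspose_same _
  have h2 := hps.dotProduct_mulVec_nonneg x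
  have h3 : (M - c • (1 : Matrix (Fin n) (Fin n) ℝ)) *ᵥ x = M *ᵥ x - c • x := by
    rw [Matrix.sub_mulVec, Matrix.smul_mulVec, Matrix.one_mulVec]
  rw [h3, star_trivial, dotProduct_sub, dotProduct_smul] at h2
  rw [smul_eq_mul] at h2
  linarith [h2]

lemma lamMin_pos (hn : 0 < n) (hdet : A.det ≠ 0) :
    0 < ⨅ i, (Matrix.isHermitian_conjTranspose_mul_self A).eigenvalues i := by
  have : Nonempty (Fin n) := ⟨⟨0, hn⟩⟩
  obtain ⟨i0, hi0⟩ := exists_eq_ciInf_of_finite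
    (f := fun i => (Matrix.isHermitian_conjTranspose_mul_self A).eigenvalues i)
  rw [← hi0]
  have hnn := Matrix.eigenvalues_conjTranspose_mul_self_nonneg A i0
  rcases hnn.lt_or_eq with h | h
  · exact h
  · exfalso
    have hprod := (Matrix.isHermitian_conjTranspose_mul_self A).det_eq_prod_eigenvalues
    have hdet2 : (Aᴴ * A).det ≠ 0 := by
      rw [Matrix.det_mul, Matrix.det_conjTranspose, star_trivial]
      exact mul_ne_zero hdet hdet
    rw [hprod] at hdet2
    exact hdet2 (Finset.prod_eq_zero (Finset.mem_univ i0) (by exact_mod_cast h.symm))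

lemma sigmaMin_eq :
    sigmaMin A = Real.sqrt (⨅ i, (Matrix.isHermitian_conjTranspose_mul_self A).eigenvalues i) := by
  have key : ∀ (M N : Matrix (Fin n) (Fin n) ℝ) (h : M = N) (hM : M.IsHermitian)
      (hN : N.IsHermitian), hM.eigenvalues = hN.eigenvalues := by
    intro M N h hM hN; subst h; rfl
  rw [sigmaMin, key _ _ (by rw [Matrix.conjTranspose_eq_transpose_of_trivial]) _
    (Matrix.isHermitian_conjTranspose_mul_self A)]

lemma sigmaMin_pos (hn : 0 < n) (hdet : A.det ≠ 0) : 0 < sigmaMin A := by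
  rw [sigmaMin_eq]; exact Real.sqrt_pos.mpr (lamMin_pos A hn hdet)

lemma sq_sigmaMin (hn : 0 < n) (hdet : A.det ≠ 0) :
    sigmaMin A ^ 2 = ⨅ i, (Matrix.isHermitian_conjTranspose_mul_self A).eigenvalues i := by
  rw [sigmaMin_eq]; exact Real.sq_sqrt (lamMin_pos A hn hdet).le

lemma mulVec_Kvec (hdet : A.det ≠ 0) :
    A *ᵥ Kvec A = fun i => rowEntropy A i := by
  have h1 : Kvec A = A⁻¹ *ᵥ (fun i => rowEntropy A i) := by
    funext j; simp [Kvec, Matrix.mulVec, dotProduct]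
  rw [h1, Matrix.mulVec_mulVec, Matrix.mul_nonsing_inv A (isUnit_iff_ne_zero.mpr hdet),
    Matrix.one_mulVec]

lemma rowEntropy_le_Hmax (hn : 0 < n) (i : Fin n) : rowEntropy A i ≤ Hmax A := by
  have : Nonempty (Fin n) := ⟨⟨0, hn⟩⟩
  exact le_ciSup (Set.Finite.bddAbove (Set.finite_range _)) i

lemma Hmax_nonneg (hn : 0 < n) (hst : RowStochastic A) : 0 ≤ Hmax A := by
  have : Nonempty (Fin n) := ⟨⟨0, hn⟩⟩
  refine le_trans ?_ (rowEntropy_le_Hmax A hn ⟨0, hn⟩)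
  rw [rowEntropy, neg_nonneg]
  apply Finset.sum_nonpos
  intro k _
  apply mul_nonpos_of_nonneg_of_nonpos (hst.1 _ k)
  apply Real.logb_nonpos one_lt_two (hst.1 _ k)
  rw [← hst.2 ⟨0, hn⟩]
  exact Finset.single_le_sum (fun j _ => hst.1 _ j) (Finset.mem_univ k)

lemma deltaK_le (hn : 2 ≤ n) (hst : RowStochastic A) (hdet : A.det ≠ 0) (j k : Fin n) :
    Kvec A j - Kvec A k ≤ (n : ℝ) * Hmax A / sigmaMin A := by
  have hn0 : 0 < n := by omega
  have hσ := sigmaMin_pos A hn0 hdet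
  have hHm := Hmax_nonneg A hn0 hst
  set σ := sigmaMin A with hσdef
  set K := Kvec A with hKdef
  have hdp : K ⬝ᵥ ((Aᴴ * A) *ᵥ K) = (A *ᵥ K) ⬝ᵥ (A *ᵥ K) := by
    rw [← Matrix.mulVec_mulVec, dotProduct_mulVec]
    congr 1
    rw [show Aᴴ = Aᵀ from by ext a b; simp [Matrix.conjTranspose_apply],
      Matrix.vecMul_transpose]
  have key : σ ^ 2 * (K ⬝ᵥ K) ≤ (n : ℝ) * Hmax A ^ 2 := by
    have h1 : σ ^ 2 * (K ⬝ᵥ K) ≤ K ⬝ᵥ ((Aᴴ * A) *ᵥ K) := by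
      rw [sq_sigmaMin A hn0 hdet]
      exact rayleigh (Aᴴ * A) (Matrix.isHermitian_conjTranspose_mul_self A) _
        (fun i => ciInf_le (Set.Finite.bddBelow (Set.finite_range _)) i) K
    have h2 : K ⬝ᵥ ((Aᴴ * A) *ᵥ K) = ∑ i, rowEntropy A i ^ 2 := by
      rw [hdp, mulVec_Kvec A hdet]; simp [dotProduct, sq]
    have h3 : ∑ i, rowEntropy A i ^ 2 ≤ ∑ _i : Fin n, Hmax A ^ 2 :=
      Finset.sum_le_sum fun i _ =>
        pow_le_pow_left₀ (rowEntropy_nonneg A hst i) (rowEntropy_le_Hmax A hn0 i) 2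
    rw [Finset.sum_const, Finset.card_univ, Fintype.card_fin, nsmul_eq_mul] at h3
    linarith
  have hKK : K ⬝ᵥ K = ∑ m, K m ^ 2 := by simp [dotProduct, sq]
  have hb : 0 ≤ (n : ℝ) * Hmax A / σ := by positivity
  by_cases hjk : j = k
  · subst hjk; simpa using hb
  · have hsub : K j ^ 2 + K k ^ 2 ≤ K ⬝ᵥ K := by
      rw [hKK]
      have := Finset.sum_le_sum_of_subset_of_nonneg (Finset.subset_univ {j, k})
        (fun m _ _ => sq_nonneg (K m))
      rwa [Finset.sum_pair hjk] at this
    have hsq : (K j - K k) ^ 2 ≤ 2 * (K ⬝ᵥ K) := by nlinarith [sq_nonneg (K j + K k)]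
    have hσ2 : 0 < σ ^ 2 := by positivity
    have h4 : (K j - K k) ^ 2 ≤ ((n : ℝ) * Hmax A / σ) ^ 2 := by
      rw [div_pow, mul_pow, le_div_iff₀ hσ2]
      have hn2 : (2 : ℝ) ≤ (n : ℝ) := by exact_mod_cast hn
      nlinarith [mul_le_mul_of_nonneg_right hsq (sq_nonneg σ), key, sq_nonneg (Hmax A),
        mul_nonneg (mul_nonneg (sub_nonneg.mpr hn2) (Nat.cast_nonneg n : (0:ℝ) ≤ n)) (sq_nonneg (Hmax A))]
    calc K j - K k ≤ |K j - K k| := le_abs_self _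
      _ = Real.sqrt ((K j - K k) ^ 2) := (Real.sqrt_sq_eq_abs _).symm
      _ ≤ Real.sqrt (((n : ℝ) * Hmax A / σ) ^ 2) := Real.sqrt_le_sqrt h4
      _ = (n : ℝ) * Hmax A / σ := Real.sqrt_sq hb

lemma S_pos (hn : 0 < n) : 0 < ∑ i, (2 : ℝ) ^ (-Kvec A i) := by
  have : Nonempty (Fin n) := ⟨⟨0, hn⟩⟩
  exact Finset.sum_pos (fun i _ => Real.rpow_pos_of_pos two_pos _) Finset.univ_nonempty

lemma qStar_pos (hn : 0 < n) (j : Fin n) : 0 < qStar A j :=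
  div_pos (Real.rpow_pos_of_pos two_pos _) (S_pos A hn)

lemma qStar_sum (hn : 0 < n) : ∑ j, qStar A j = 1 := by
  simp only [qStar]
  rw [← Finset.sum_div, div_self (S_pos A hn).ne']

lemma cmin_facts (hn : 2 ≤ n) (hA : SDDPos A) :
    1 < cmin A ∧ ∀ j, cmin A * (∑ k ∈ Finset.univ.erase j, A j k) ≤ A j j := by
  have : Nonempty (Fin n) := ⟨⟨0, by omega⟩⟩
  have habs : ∀ j, (∑ k ∈ Finset.univ.erase j, |A j k|) = ∑ k ∈ Finset.univ.erase j, A j k :=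
    fun j => Finset.sum_congr rfl fun k _ => abs_of_pos (hA.1 j k)
  have hR : ∀ j, 0 < ∑ k ∈ Finset.univ.erase j, A j k := by
    intro j
    obtain ⟨k, hk⟩ := Fintype.exists_ne_of_one_lt_card (by simp; omega) j
    exact Finset.sum_pos' (fun k _ => (hA.1 j k).le)
      ⟨k, Finset.mem_erase.mpr ⟨hk, Finset.mem_univ k⟩, hA.1 j k⟩
  have hle : ∀ j, cmin A ≤ A j j / ∑ k ∈ Finset.univ.erase j, A j k := by
    intro j
    have := ciInf_le (Set.Finite.bddBelow (Set.finite_range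
      (fun i => A i i / ∑ k ∈ Finset.univ.erase i, |A i k|))) j
    calc cmin A ≤ A j j / ∑ k ∈ Finset.univ.erase j, |A j k| := this
      _ = A j j / ∑ k ∈ Finset.univ.erase j, A j k := by rw [habs j]
  constructor
  · obtain ⟨j0, hj0⟩ := exists_eq_ciInf_of_finite
      (f := fun i => A i i / ∑ k ∈ Finset.univ.erase i, |A i k|)
    have hc : cmin A = A j0 j0 / ∑ k ∈ Finset.univ.erase j0, |A j0 k| := hj0.symm
    rw [habs j0] at hc
    rw [hc, lt_div_iff₀ (hR j0), one_mul]
    exact hA.2 j0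
  · intro j
    have h2 := hle j
    rw [le_div_iff₀ (hR j)] at h2
    exact h2

lemma cmin_gt_one (hn : 2 ≤ n) (hA : SDDPos A) : 1 < cmin A :=
  (cmin_facts A hn hA).1

lemma cmin_mul_R_le (hn : 2 ≤ n) (hA : SDDPos A) :
    ∀ j, cmin A * (∑ k ∈ Finset.univ.erase j, A j k) ≤ A j j :=
  (cmin_facts A hn hA).2

lemma qStar_ratio (hn : 2 ≤ n) (hst : RowStochastic A) (hA : SDDPos A) (hdet : A.det ≠ 0)
    (hcond : (2 : ℝ) ^ ((n : ℝ) * Hmax A / sigmaMin A) ≤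
        ((cmin A - 1) / ((n : ℝ) - 1) ^ 2) ^ ((1 : ℝ) / (cmin A / (cmin A - 1)))) :
    ∀ j k, ((n : ℝ) - 1) * qStar A j ≤ cmin A * qStar A k := by
  have hn0 : 0 < n := by omega
  have hn1 : (1 : ℝ) ≤ (n : ℝ) - 1 := by
    have : (2 : ℝ) ≤ (n : ℝ) := by exact_mod_cast hn
    linarith
  have hc1 : 1 < cmin A := cmin_gt_one A hn hA
  set c := cmin A
  set t := (n : ℝ) * Hmax A / sigmaMin A with ht
  have ht0 : 0 ≤ t :=
    div_nonneg (mul_nonneg (Nat.cast_nonneg n) (Hmax_nonneg A hn0 hst)) (sigmaMin_pos A hn0 hdet).le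
  set b := (c - 1) / ((n : ℝ) - 1) ^ 2 with hbdef
  have hb0 : 0 < b := div_pos (by linarith) (by positivity)
  have hexp : (1 : ℝ) / (c / (c - 1)) = (c - 1) / c := one_div_div _ _
  have he0 : 0 < (c - 1) / c := div_pos (by linarith) (by linarith)
  have he1 : (c - 1) / c ≤ 1 := by
    rw [div_le_one (by linarith)]; linarith
  have h1t : (1 : ℝ) ≤ (2 : ℝ) ^ t := by
    rw [show (1 : ℝ) = (2 : ℝ) ^ (0 : ℝ) from (Real.rpow_zero 2).symm]
    exact Real.rpow_le_rpow_of_exponent_le one_le_two ht0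
  rw [hexp] at hcond
  have hb1 : 1 ≤ b := by
    by_contra hlt
    push_neg at hlt
    have := Real.rpow_lt_one hb0.le hlt he0
    linarith
  have hchain : (2 : ℝ) ^ t ≤ b := by
    calc (2 : ℝ) ^ t ≤ b ^ ((c - 1) / c) := hcond
      _ ≤ b ^ (1 : ℝ) := Real.rpow_le_rpow_of_exponent_le hb1 he1
      _ = b := Real.rpow_one b
  have hbc : b ≤ c / ((n : ℝ) - 1) := by
    rw [hbdef, div_le_div_iff₀ (by positivity) (by linarith)]
    have ha : (n:ℝ) - 1 ≤ ((n:ℝ) - 1) ^ 2 := by nlinarith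
    have hb : c * ((n:ℝ) - 1) ≤ c * ((n:ℝ) - 1) ^ 2 :=
      mul_le_mul_of_nonneg_left ha (by linarith)
    nlinarith
  intro j k
  have hq : qStar A j ≤ (2 : ℝ) ^ t * qStar A k := by
    have hKd : -Kvec A j ≤ t + -Kvec A k := by
      have := deltaK_le A hn hst hdet k j
      linarith
    have := Real.rpow_le_rpow_of_exponent_le one_le_two hKd
    rw [Real.rpow_add two_pos] at this
    have hS := S_pos A hn0
    calc qStar A j = (2 : ℝ) ^ (-Kvec A j) / (∑ i, (2:ℝ) ^ (-Kvec A i)) := rfl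
      _ ≤ ((2 : ℝ) ^ t * (2 : ℝ) ^ (-Kvec A k)) / (∑ i, (2:ℝ) ^ (-Kvec A i)) := by
          gcongr
      _ = (2 : ℝ) ^ t * qStar A k := by rw [qStar, mul_div_assoc]
  have hq0 : 0 ≤ qStar A k :=
    (div_pos (Real.rpow_pos_of_pos two_pos _) (S_pos A hn0)).le
  calc ((n : ℝ) - 1) * qStar A j ≤ ((n : ℝ) - 1) * ((2:ℝ) ^ t * qStar A k) := by
        apply mul_le_mul_of_nonneg_left hq (by linarith)
    _ ≤ c * qStar A k := by
        have h3 : (2 : ℝ) ^ t ≤ c / ((n : ℝ) - 1) := le_trans hchain hbc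
        rw [le_div_iff₀ (show (0:ℝ) < (n:ℝ) - 1 by linarith)] at h3
        nlinarith [mul_le_mul_of_nonneg_right h3 hq0]

lemma mulVec_invCol (hdet : A.det ≠ 0) (i : Fin n) :
    A *ᵥ (fun j => A⁻¹ j i) = fun j => if j = i then (1 : ℝ) else 0 := by
  funext j
  have h := congrFun (congrFun (Matrix.mul_nonsing_inv A (isUnit_iff_ne_zero.mpr hdet)) j) i
  simpa [Matrix.mul_apply, Matrix.mulVec, dotProduct, Matrix.one_apply] using h

lemma pStar_nonneg (hn : 2 ≤ n) (hst : RowStochastic A) (hA : SDDPos A) (hdet : A.det ≠ 0)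
    (hq : ∀ j k, ((n : ℝ) - 1) * qStar A j ≤ cmin A * qStar A k) (i : Fin n) :
    0 ≤ pStar A i := by
  have hn0 : 0 < n := by omega
  have hc1 : 1 < cmin A := cmin_gt_one A hn hA
  set x : Fin n → ℝ := fun j => A⁻¹ j i with hxdef
  have hx := mulVec_invCol A hdet i
  have hxeq : ∀ j, ∑ k, A j k * x k = if j = i then (1:ℝ) else 0 := by
    intro j; exact congrFun hx j
  -- (a) max of |x| is at i
  have habs : ∀ j, |x j| ≤ |x i| := by
    obtain ⟨j0, _, hj0⟩ := Finset.exists_max_image Finset.univ (fun j => |x j|)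
      ⟨i, Finset.mem_univ i⟩
    by_cases hji : j0 = i
    · intro j; rw [← hji]; exact hj0 j (Finset.mem_univ j)
    · exfalso
      have h0 : ∑ k, A j0 k * x k = 0 := by rw [hxeq j0, if_neg hji]
      have hsplit : A j0 j0 * x j0 = -∑ k ∈ Finset.univ.erase j0, A j0 k * x k := by
        have hsum : A j0 j0 * x j0 + ∑ k ∈ Finset.univ.erase j0, A j0 k * x k
            = ∑ k, A j0 k * x k := by
          exact Finset.add_sum_erase Finset.univ (fun k => A j0 k * x k) (Finset.mem_univ j0)
        linarith
      have hb1 : A j0 j0 * |x j0| ≤ (∑ k ∈ Finset.univ.erase j0, A j0 k) * |x j0| := by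
        calc A j0 j0 * |x j0| = |A j0 j0 * x j0| := by
              rw [abs_mul, abs_of_pos (hA.1 j0 j0)]
          _ = |∑ k ∈ Finset.univ.erase j0, A j0 k * x k| := by rw [hsplit, abs_neg]
          _ ≤ ∑ k ∈ Finset.univ.erase j0, |A j0 k * x k| := Finset.abs_sum_le_sum_abs _ _
          _ ≤ ∑ k ∈ Finset.univ.erase j0, A j0 k * |x j0| := by
              apply Finset.sum_le_sum
              intro k _
              rw [abs_mul, abs_of_pos (hA.1 j0 k)]
              exact mul_le_mul_of_nonneg_left (hj0 k (Finset.mem_univ k)) (hA.1 j0 k).le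
          _ = (∑ k ∈ Finset.univ.erase j0, A j0 k) * |x j0| := by rw [Finset.sum_mul]
      have hx0 : |x j0| = 0 := by nlinarith [hA.2 j0, abs_nonneg (x j0)]
      have hall : ∀ k, x k = 0 := by
        intro k
        have := hj0 k (Finset.mem_univ k)
        rw [hx0] at this
        exact abs_eq_zero.mp (le_antisymm this (abs_nonneg _))
      have := hxeq i
      simp [hall] at this
  -- (b) x i > 0
  have hxi : 0 < x i := by
    by_contra hle
    push_neg at hle
    have h1 : ∑ k, A i k * x k = 1 := by rw [hxeq i, if_pos rfl]
    have hsplit : A i i * x i + ∑ k ∈ Finset.univ.erase i, A i k * x k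
        = ∑ k, A i k * x k := by
      exact Finset.add_sum_erase Finset.univ (fun k => A i k * x k) (Finset.mem_univ i)
    have hbound : ∑ k ∈ Finset.univ.erase i, A i k * x k
        ≤ (∑ k ∈ Finset.univ.erase i, A i k) * |x i| := by
      rw [Finset.sum_mul]
      apply Finset.sum_le_sum
      intro k _
      calc A i k * x k ≤ |A i k * x k| := le_abs_self _
        _ = A i k * |x k| := by rw [abs_mul, abs_of_pos (hA.1 i k)]
        _ ≤ A i k * |x i| := mul_le_mul_of_nonneg_left (habs k) (hA.1 i k).le
    have habsi : |x i| = -x i := abs_of_nonpos hle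
    nlinarith [hA.2 i, h1, hsplit, hbound, hA.1 i i]
  -- (c) cmin * |x j| ≤ x i for j ≠ i
  have hxj : ∀ j, j ≠ i → cmin A * |x j| ≤ x i := by
    intro j hji
    have h0 : ∑ k, A j k * x k = 0 := by rw [hxeq j, if_neg hji]
    have hsplit : A j j * x j = -∑ k ∈ Finset.univ.erase j, A j k * x k := by
      have hsum : A j j * x j + ∑ k ∈ Finset.univ.erase j, A j k * x k
          = ∑ k, A j k * x k := by
        exact Finset.add_sum_erase Finset.univ (fun k => A j k * x k) (Finset.mem_univ j)
      linarith
    have hb1 : A j j * |x j| ≤ (∑ k ∈ Finset.univ.erase j, A j k) * x i := by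
      calc A j j * |x j| = |A j j * x j| := by rw [abs_mul, abs_of_pos (hA.1 j j)]
        _ = |∑ k ∈ Finset.univ.erase j, A j k * x k| := by rw [hsplit, abs_neg]
        _ ≤ ∑ k ∈ Finset.univ.erase j, |A j k * x k| := Finset.abs_sum_le_sum_abs _ _
        _ ≤ ∑ k ∈ Finset.univ.erase j, A j k * |x i| := by
            apply Finset.sum_le_sum
            intro k _
            rw [abs_mul, abs_of_pos (hA.1 j k)]
            exact mul_le_mul_of_nonneg_left (habs k) (hA.1 j k).le
        _ = (∑ k ∈ Finset.univ.erase j, A j k) * |x i| := by rw [Finset.sum_mul]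
        _ = (∑ k ∈ Finset.univ.erase j, A j k) * x i := by rw [abs_of_pos hxi]
    have hcR := cmin_mul_R_le A hn hA j
    have hRpos : 0 < ∑ k ∈ Finset.univ.erase j, A j k := by
      obtain ⟨k, hk⟩ := Fintype.exists_ne_of_one_lt_card (by simp; omega) j
      exact Finset.sum_pos' (fun k _ => (hA.1 j k).le)
        ⟨k, Finset.mem_erase.mpr ⟨hk, Finset.mem_univ k⟩, hA.1 j k⟩
    -- cmin * (A j j * |x j|) ≤ cmin * (R_j * x i) ≤ A j j * x i  then divide by A j j
    have h2 : cmin A * (A j j * |x j|) ≤ A j j * x i := by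
      calc cmin A * (A j j * |x j|) ≤ cmin A * ((∑ k ∈ Finset.univ.erase j, A j k) * x i) :=
            mul_le_mul_of_nonneg_left hb1 (by linarith)
        _ = (cmin A * (∑ k ∈ Finset.univ.erase j, A j k)) * x i := by ring
        _ ≤ A j j * x i := mul_le_mul_of_nonneg_right hcR hxi.le
    have hAjj := hA.1 j j
    nlinarith [abs_nonneg (x j)]
  -- (d) conclude
  have hpi : pStar A i = ∑ j, x j * qStar A j := by
    simp [pStar, Matrix.mulVec, dotProduct, Matrix.transpose_apply, hxdef]
  have hn1 : (0:ℝ) < (n:ℝ) - 1 := by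
    have : (2:ℝ) ≤ (n:ℝ) := by exact_mod_cast hn
    linarith
  have hsum : x i * qStar A i + ∑ j ∈ Finset.univ.erase i, x j * qStar A j
      = ∑ j, x j * qStar A j := by
    exact Finset.add_sum_erase Finset.univ (fun j => x j * qStar A j) (Finset.mem_univ i)
  have hterm : ∀ j ∈ Finset.univ.erase i, |x j| * qStar A j ≤ x i * qStar A i / ((n:ℝ) - 1) := by
    intro j hj
    have hji := (Finset.mem_erase.mp hj).1
    have hq1 := hq j i
    have hqj := (qStar_pos A hn0 j).le
    have hqi := (qStar_pos A hn0 i).le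
    have hxij := hxj j hji
    have h1 : |x j| * (((n:ℝ) - 1) * qStar A j) ≤ |x j| * (cmin A * qStar A i) :=
      mul_le_mul_of_nonneg_left hq1 (abs_nonneg (x j))
    have h2 : (cmin A * |x j|) * qStar A i ≤ x i * qStar A i :=
      mul_le_mul_of_nonneg_right hxij hqi
    rw [le_div_iff₀ hn1]
    nlinarith
  have hsum2 : ∑ j ∈ Finset.univ.erase i, |x j| * qStar A j ≤ x i * qStar A i := by
    have hcard : ((Finset.univ.erase i).card : ℝ) = (n:ℝ) - 1 := by
      rw [Finset.card_erase_of_mem (Finset.mem_univ i)]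
      simp [Finset.card_univ]
      rw [Nat.cast_sub (by omega)]
      simp
    calc ∑ j ∈ Finset.univ.erase i, |x j| * qStar A j
        ≤ (Finset.univ.erase i).card • (x i * qStar A i / ((n:ℝ) - 1)) :=
          Finset.sum_le_card_nsmul _ _ _ hterm
      _ = ((Finset.univ.erase i).card : ℝ) * (x i * qStar A i / ((n:ℝ) - 1)) := nsmul_eq_mul _ _
      _ = x i * qStar A i := by rw [hcard]; field_simp
  have hneg : -∑ j ∈ Finset.univ.erase i, |x j| * qStar A j
      ≤ ∑ j ∈ Finset.univ.erase i, x j * qStar A j := by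
    rw [← Finset.sum_neg_distrib]
    apply Finset.sum_le_sum
    intro j hj
    have : |x j * qStar A j| = |x j| * qStar A j := by
      rw [abs_mul, abs_of_nonneg (qStar_pos A hn0 j).le]
    linarith [neg_abs_le (x j * qStar A j)]
  rw [hpi, ← hsum]
  have hxiq : 0 ≤ x i * qStar A i := mul_nonneg hxi.le (qStar_pos A hn0 i).le
  linarith

lemma pStar_sum (hst : RowStochastic A) (hdet : A.det ≠ 0) (hn : 0 < n) :
    ∑ i, pStar A i = 1 := by
  have hones : A⁻¹ *ᵥ (fun _ => (1:ℝ)) = fun _ => (1:ℝ) := by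
    have h1 : A *ᵥ (fun _ => (1:ℝ)) = fun _ => (1:ℝ) := by
      funext i; simpa [Matrix.mulVec, dotProduct] using hst.2 i
    conv_lhs => rw [← h1]
    rw [Matrix.mulVec_mulVec, Matrix.nonsing_inv_mul A (isUnit_iff_ne_zero.mpr hdet),
      Matrix.one_mulVec]
  have hrow : ∀ j, ∑ i, A⁻¹ j i = 1 := by
    intro j
    have := congrFun hones j
    simpa [Matrix.mulVec, dotProduct] using this
  calc ∑ i, pStar A i = ∑ i, ∑ j, A⁻¹ j i * qStar A j := by
        apply Finset.sum_congr rfl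
        intro i _
        simp [pStar, Matrix.mulVec, dotProduct, Matrix.transpose_apply]
    _ = ∑ j, (∑ i, A⁻¹ j i) * qStar A j := by
        rw [Finset.sum_comm]
        exact Finset.sum_congr rfl fun j _ => by rw [Finset.sum_mul]
    _ = ∑ j, qStar A j := by simp [hrow]
    _ = 1 := qStar_sum A hn

lemma transpose_mulVec_pStar (hdet : A.det ≠ 0) :
    Aᵀ *ᵥ pStar A = qStar A := by
  rw [pStar, Matrix.mulVec_mulVec, ← Matrix.transpose_mul,
    Matrix.nonsing_inv_mul A (isUnit_iff_ne_zero.mpr hdet), Matrix.transpose_one,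
    Matrix.one_mulVec]

lemma gibbs (q r : Fin n → ℝ) (hq : ∀ j, 0 ≤ q j) (hq1 : ∑ j, q j = 1)
    (hr : ∀ j, 0 < r j) (hr1 : ∑ j, r j = 1) :
    ∑ j, q j * Real.logb 2 (r j) ≤ ∑ j, q j * Real.logb 2 (q j) := by
  have hlog2 : (0:ℝ) < Real.log 2 := Real.log_pos one_lt_two
  have key : ∀ j, q j * Real.log (r j) - q j * Real.log (q j) ≤ r j - q j := by
    intro j
    rcases (hq j).lt_or_eq with h | h
    · have hlog := Real.log_le_sub_one_of_pos (div_pos (hr j) h)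
      rw [Real.log_div (hr j).ne' h.ne'] at hlog
      have h2 := mul_le_mul_of_nonneg_left hlog h.le
      have h3 : q j * (r j / q j - 1) = r j - q j := by field_simp
      nlinarith
    · simp [← h]
      exact (hr j).le
  have hsum : ∑ j, (q j * Real.log (r j) - q j * Real.log (q j)) ≤ ∑ j, (r j - q j) :=
    Finset.sum_le_sum fun j _ => key j
  rw [Finset.sum_sub_distrib, Finset.sum_sub_distrib, hq1, hr1] at hsum
  have hrw : ∀ f : Fin n → ℝ, ∑ j, q j * Real.logb 2 (f j)
      = (∑ j, q j * Real.log (f j)) / Real.log 2 := by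
    intro f
    rw [Finset.sum_div]
    exact Finset.sum_congr rfl fun j _ => by rw [Real.logb, mul_div_assoc]
  rw [hrw q, hrw r, div_le_div_iff_of_pos_right hlog2]
  linarith

lemma sum_tmul (hst : RowStochastic A) (p : Fin n → ℝ) (hp1 : ∑ i, p i = 1) :
    ∑ j, (Aᵀ *ᵥ p) j = 1 := by
  calc ∑ j, (Aᵀ *ᵥ p) j = ∑ j, ∑ i, A i j * p i := by
        refine Finset.sum_congr rfl fun j _ => ?_
        simp [Matrix.mulVec, dotProduct, Matrix.transpose_apply]
    _ = ∑ i, ∑ j, A i j * p i := Finset.sum_comm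
    _ = ∑ i, p i := by
        refine Finset.sum_congr rfl fun i _ => ?_
        rw [← Finset.sum_mul, hst.2 i, one_mul]
    _ = 1 := hp1

lemma mutualInfo_formula (hn : 0 < n) (hst : RowStochastic A) (hdet : A.det ≠ 0)
    (p : Fin n → ℝ) (hp1 : ∑ i, p i = 1) :
    mutualInfo A p = (∑ j, (Aᵀ *ᵥ p) j * Real.logb 2 (qStar A j)
      - ∑ j, (Aᵀ *ᵥ p) j * Real.logb 2 ((Aᵀ *ᵥ p) j))
      + Real.logb 2 (∑ i, (2:ℝ) ^ (-Kvec A i)) := by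
  have hS := S_pos A hn
  have hT : ∑ i, ∑ j, p i * A i j * Real.logb 2 (A i j) = -∑ i, p i * rowEntropy A i := by
    calc ∑ i, ∑ j, p i * A i j * Real.logb 2 (A i j)
        = ∑ i, p i * ∑ j, A i j * Real.logb 2 (A i j) := by
          refine Finset.sum_congr rfl fun i _ => ?_
          rw [Finset.mul_sum]
          exact Finset.sum_congr rfl fun j _ => by ring
      _ = -∑ i, p i * rowEntropy A i := by
          rw [← Finset.sum_neg_distrib]
          exact Finset.sum_congr rfl fun i _ => by rw [rowEntropy]; ring
  have hqsum := sum_tmul A hst p hp1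
  have hAK : ∀ i, ∑ j, A i j * Kvec A j = rowEntropy A i := by
    intro i
    have := congrFun (mulVec_Kvec A hdet) i
    simpa [Matrix.mulVec, dotProduct] using this
  have hKrel : ∑ j, (Aᵀ *ᵥ p) j * Kvec A j = ∑ i, p i * rowEntropy A i := by
    calc ∑ j, (Aᵀ *ᵥ p) j * Kvec A j = ∑ j, ∑ i, (A i j * p i) * Kvec A j := by
          refine Finset.sum_congr rfl fun j _ => ?_
          have hqj : (Aᵀ *ᵥ p) j = ∑ i, A i j * p i := by
            simp [Matrix.mulVec, dotProduct, Matrix.transpose_apply]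
          rw [hqj, Finset.sum_mul]
      _ = ∑ i, ∑ j, (A i j * p i) * Kvec A j := Finset.sum_comm
      _ = ∑ i, p i * rowEntropy A i := by
          refine Finset.sum_congr rfl fun i _ => ?_
          rw [← hAK i, Finset.mul_sum]
          exact Finset.sum_congr rfl fun j _ => by ring
  have hlogq : ∀ j, Real.logb 2 (qStar A j)
      = -Kvec A j - Real.logb 2 (∑ i, (2:ℝ) ^ (-Kvec A i)) := by
    intro j
    rw [qStar, Real.logb_div (Real.rpow_pos_of_pos two_pos _).ne' hS.ne',
      Real.logb_rpow two_pos (by norm_num)]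
  have E1 : ∑ j, (Aᵀ *ᵥ p) j * Real.logb 2 (qStar A j)
      = -(∑ i, p i * rowEntropy A i) - Real.logb 2 (∑ i, (2:ℝ) ^ (-Kvec A i)) := by
    calc ∑ j, (Aᵀ *ᵥ p) j * Real.logb 2 (qStar A j)
        = ∑ j, (-((Aᵀ *ᵥ p) j * Kvec A j)
            - (Aᵀ *ᵥ p) j * Real.logb 2 (∑ i, (2:ℝ) ^ (-Kvec A i))) := by
          refine Finset.sum_congr rfl fun j _ => ?_
          rw [hlogq j]; ring
      _ = -(∑ j, (Aᵀ *ᵥ p) j * Kvec A j)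
            - (∑ j, (Aᵀ *ᵥ p) j) * Real.logb 2 (∑ i, (2:ℝ) ^ (-Kvec A i)) := by
          rw [Finset.sum_sub_distrib, Finset.sum_neg_distrib, ← Finset.sum_mul]
      _ = -(∑ i, p i * rowEntropy A i) - Real.logb 2 (∑ i, (2:ℝ) ^ (-Kvec A i)) := by
          rw [hKrel, hqsum, one_mul]
  rw [mutualInfo, hT, E1]
  ring

lemma mutualInfo_le (hn : 0 < n) (hst : RowStochastic A) (hdet : A.det ≠ 0)
    (p : Fin n → ℝ) (hp : IsPmf p) :
    mutualInfo A p ≤ Real.logb 2 (∑ i, (2:ℝ) ^ (-Kvec A i)) := by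
  rw [mutualInfo_formula A hn hst hdet p hp.2]
  have hqnn : ∀ j, 0 ≤ (Aᵀ *ᵥ p) j := by
    intro j
    have : (Aᵀ *ᵥ p) j = ∑ i, A i j * p i := by
      simp [Matrix.mulVec, dotProduct, Matrix.transpose_apply]
    rw [this]
    exact Finset.sum_nonneg fun i _ => mul_nonneg (hst.1 i j) (hp.1 i)
  have hg := gibbs (fun j => (Aᵀ *ᵥ p) j) (qStar A) hqnn (sum_tmul A hst p hp.2)
    (qStar_pos A hn) (qStar_sum A hn)
  linarith

lemma mutualInfo_pStar (hn : 0 < n) (hst : RowStochastic A) (hdet : A.det ≠ 0) :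
    mutualInfo A (pStar A) = Real.logb 2 (∑ i, (2:ℝ) ^ (-Kvec A i)) := by
  rw [mutualInfo_formula A hn hst hdet (pStar A) (pStar_sum A hst hdet hn),
    transpose_mulVec_pStar A hdet]
  ring

lemma Ubound_eq (hn : 0 < n) (hst : RowStochastic A) (hdet : A.det ≠ 0) :
    Ubound A = Real.logb 2 (∑ i, (2:ℝ) ^ (-Kvec A i)) := by
  rw [← mutualInfo_pStar A hn hst hdet, mutualInfo, Ubound]
  have h := transpose_mulVec_pStar A hdet
  simp only [h]

theorem main (hn : 2 ≤ n) (hst : RowStochastic A) (hA : SDDPos A) (hdet : A.det ≠ 0)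
    (hpmf : IsPmf (pStar A)) : capacity A = Ubound A := by
  have hn0 : 0 < n := by omega
  rw [capacity, Ubound_eq A hn0 hst hdet]
  apply IsGreatest.csSup_eq
  constructor
  · exact ⟨pStar A, hpmf, mutualInfo_pStar A hn0 hst hdet⟩
  · rintro x ⟨p, hp, rfl⟩
    exact mutualInfo_le A hn0 hst hdet p hp

end Cap

theorem capacity_eq_Ubound_of_singular_cond {n : ℕ} (hn : 2 ≤ n)
    (A : Matrix (Fin n) (Fin n) ℝ) (hst : RowStochastic A) (hA : SDDPos A)
    (hcond : (2 : ℝ) ^ ((n : ℝ) * Hmax A / sigmaMin A) ≤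
        ((cmin A - 1) / ((n : ℝ) - 1) ^ 2) ^ ((1 : ℝ) / (cmin A / (cmin A - 1)))) :
    capacity A = Ubound A := by
  have hdet : A.det ≠ 0 := Cap.det_ne A hA
  have hq := Cap.qStar_ratio A hn hst hA hdet hcond
  have hpmf : IsPmf (pStar A) :=
    ⟨Cap.pStar_nonneg A hn hst hA hdet hq, Cap.pStar_sum A hst hdet (by omega)⟩
  exact Cap.main A hn hst hA hdet hpmf
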